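/- Let G be a group and let α_1, α_2, α_3, α_5, α_6, α_7, σ_1, σ_2, σ_4, σ_7, β be elements of G. Set β_2 = α_2 β α_2⁻¹, β_6 = α_6 β α_6⁻¹, β_b2 = α_2⁻¹ β α_2 and β_b6 = α_6⁻¹ β α_6. Assume α_5 α_7 = α_7 α_5, α_1 α_3 = α_3 α_1, and that the product z = α_5 α_7 β_b6 β_2 σ_2 σ_1 α_1 α_3 β_b2 β_6 σ_4 σ_7 is central in G. Then the 12-tuple (α_5, α_7, β_b6, β_2, σ_2, σ_1, α_1, α_3, β_b2, β_6, σ_4, σ_7) is Hurwitz equivalent to the 12-tuple (α_5, β_2 σ_2 β_2⁻¹, β_2 σ_1 β_2⁻¹, α_3, α_3⁻¹ β_2 α_3, α_1 β_b2 α_1⁻¹, α_1, β_6 σ_4 β_6⁻¹, β_6 σ_7 β_6⁻¹, α_7, α_7⁻¹ β_6 α_7, α_5 β_b6 α_5⁻¹). -/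

import Mathlib

/-- An elementary Hurwitz move on a tuple of elements of a group: replace an adjacent
pair `(a, b)` by `(a * b * a⁻¹, a)` or by `(b, b⁻¹ * a * b)`. -/
inductive HurwitzMove {G : Type*} [Group G] : List G → List G → Prop
  | slideLeft (l₁ l₂ : List G) (a b : G) :
      HurwitzMove (l₁ ++ a :: b :: l₂) (l₁ ++ (a * b * a⁻¹) :: a :: l₂)
  | slideRight (l₁ l₂ : List G) (a b : G) :
      HurwitzMove (l₁ ++ a :: b :: l₂) (l₁ ++ b :: (b⁻¹ * a * b) :: l₂)

/-- Two tuples are Hurwitz equivalent if one is obtained from the other by a finite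
sequence of elementary Hurwitz moves. -/
def HurwitzEquiv {G : Type*} [Group G] : List G → List G → Prop :=
  Relation.ReflTransGen HurwitzMove

section Helpers

variable {G : Type*} [Group G]

lemma hurwitzMove_prod_eq {l l' : List G} (h : HurwitzMove l l') : l.prod = l'.prod := by
  cases h <;>
    simp [List.prod_append, List.prod_cons, mul_assoc, mul_inv_cancel_left,
      inv_mul_cancel_left]

lemma hurwitzEquiv_prod_eq {l l' : List G} (h : HurwitzEquiv l l') : l.prod = l'.prod := by
  induction h with
  | refl => rfl
  | tail _ h ih => exact ih.trans (hurwitzMove_prod_eq h)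

lemma hurwitzMove_cons (x : G) {l l' : List G} (h : HurwitzMove l l') :
    HurwitzMove (x :: l) (x :: l') := by
  cases h with
  | slideLeft l₁ l₂ a b =>
      exact HurwitzMove.slideLeft (x :: l₁) l₂ a b
  | slideRight l₁ l₂ a b =>
      exact HurwitzMove.slideRight (x :: l₁) l₂ a b

lemma hurwitzEquiv_cons (x : G) {l l' : List G} (h : HurwitzEquiv l l') :
    HurwitzEquiv (x :: l) (x :: l') :=
  Relation.ReflTransGen.lift (x :: ·) (fun _ _ h => hurwitzMove_cons x h) _ _ h

lemma hurwitz_push_right (a : G) : ∀ l : List G,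
    HurwitzEquiv (a :: l) (l ++ [l.prod⁻¹ * a * l.prod])
  | [] => by
      simp only [List.prod_nil, inv_one, one_mul, mul_one, List.nil_append]
      exact Relation.ReflTransGen.refl
  | b :: t => by
      have h1 : HurwitzMove (a :: b :: t) (b :: (b⁻¹ * a * b) :: t) :=
        HurwitzMove.slideRight ([] : List G) t a b
      refine Relation.ReflTransGen.head h1 ?_
      have h2 := hurwitzEquiv_cons b (hurwitz_push_right (b⁻¹ * a * b) t)
      simpa [List.prod_cons, mul_assoc, HurwitzEquiv] using h2

lemma hurwitz_rotate (a : G) (l : List G)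
    (h : (a :: l).prod ∈ Subgroup.center G) :
    HurwitzEquiv (a :: l) (l ++ [a]) := by
  have h' := Subgroup.mem_center_iff.mp h l.prod
  rw [List.prod_cons] at h'
  have hcomm : l.prod * a = a * l.prod := by
    have h'' : (l.prod * a) * l.prod = (a * l.prod) * l.prod := by
      rw [mul_assoc]; exact h'
    exact mul_right_cancel h''
  have e : l.prod⁻¹ * a * l.prod = a := by
    rw [mul_assoc, ← hcomm, ← mul_assoc, inv_mul_cancel, one_mul]
  have hp := hurwitz_push_right a l
  rwa [e] at hp

end Helpers

/-- The algebraic core of the Hurwitz equivalence between Tanaka's 8-holed torus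
relation and the relation `S₈ = ∂₈`. -/
theorem hurwitzEquiv_tanaka {G : Type*} [Group G]
    (α₁ α₂ α₃ α₅ α₆ α₇ σ₁ σ₂ σ₄ σ₇ β β₂ β₆ βb₂ βb₆ : G)
    (hβ₂ : β₂ = α₂ * β * α₂⁻¹) (hβ₆ : β₆ = α₆ * β * α₆⁻¹)
    (hβb₂ : βb₂ = α₂⁻¹ * β * α₂) (hβb₆ : βb₆ = α₆⁻¹ * β * α₆)
    (hc57 : α₅ * α₇ = α₇ * α₅) (hc13 : α₁ * α₃ = α₃ * α₁)
    (hz : α₅ * α₇ * βb₆ * β₂ * σ₂ * σ₁ * α₁ * α₃ * βb₂ * β₆ * σ₄ * σ₇ ∈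
      Subgroup.center G) :
    HurwitzEquiv
      [α₅, α₇, βb₆, β₂, σ₂, σ₁, α₁, α₃, βb₂, β₆, σ₄, σ₇]
      [α₅, β₂ * σ₂ * β₂⁻¹, β₂ * σ₁ * β₂⁻¹, α₃, α₃⁻¹ * β₂ * α₃, α₁ * βb₂ * α₁⁻¹, α₁,
        β₆ * σ₄ * β₆⁻¹, β₆ * σ₇ * β₆⁻¹, α₇, α₇⁻¹ * β₆ * α₇, α₅ * βb₆ * α₅⁻¹] := by
  clear hβ₂ hβ₆ hβb₂ hβb₆
  have e57 : α₅ * α₇ * α₅⁻¹ = α₇ := by rw [hc57, mul_inv_cancel_right]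
  have e13 : α₁ * α₃ * α₁⁻¹ = α₃ := by rw [hc13, mul_inv_cancel_right]
  -- Step 1: swap the commuting pair (α₅, α₇).
  have s01 : HurwitzEquiv
      [α₅, α₇, βb₆, β₂, σ₂, σ₁, α₁, α₃, βb₂, β₆, σ₄, σ₇]
      [α₇, α₅, βb₆, β₂, σ₂, σ₁, α₁, α₃, βb₂, β₆, σ₄, σ₇] := by
    have := Relation.ReflTransGen.single
      (HurwitzMove.slideLeft ([] : List G) [βb₆, β₂, σ₂, σ₁, α₁, α₃, βb₂, β₆, σ₄, σ₇] α₅ α₇)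
    rwa [show ([] : List G) ++ α₅ :: α₇ :: [βb₆, β₂, σ₂, σ₁, α₁, α₃, βb₂, β₆, σ₄, σ₇]
        = [α₅, α₇, βb₆, β₂, σ₂, σ₁, α₁, α₃, βb₂, β₆, σ₄, σ₇] from rfl,
      show ([] : List G) ++ (α₅ * α₇ * α₅⁻¹) :: α₅ :: [βb₆, β₂, σ₂, σ₁, α₁, α₃, βb₂, β₆, σ₄, σ₇]
        = (α₅ * α₇ * α₅⁻¹) :: [α₅, βb₆, β₂, σ₂, σ₁, α₁, α₃, βb₂, β₆, σ₄, σ₇] from rfl,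
      e57] at this
  have hz0 : ([α₅, α₇, βb₆, β₂, σ₂, σ₁, α₁, α₃, βb₂, β₆, σ₄, σ₇] : List G).prod
      ∈ Subgroup.center G := by
    simpa [List.prod_cons, mul_assoc] using hz
  -- Step 2: rotate α₇ to the back.
  have hz1 : ([α₇, α₅, βb₆, β₂, σ₂, σ₁, α₁, α₃, βb₂, β₆, σ₄, σ₇] : List G).prod
      ∈ Subgroup.center G := (hurwitzEquiv_prod_eq s01) ▸ hz0
  have s12 : HurwitzEquiv
      [α₇, α₅, βb₆, β₂, σ₂, σ₁, α₁, α₃, βb₂, β₆, σ₄, σ₇]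
      [α₅, βb₆, β₂, σ₂, σ₁, α₁, α₃, βb₂, β₆, σ₄, σ₇, α₇] :=
    hurwitz_rotate α₇ [α₅, βb₆, β₂, σ₂, σ₁, α₁, α₃, βb₂, β₆, σ₄, σ₇] hz1
  -- Step 3: conjugate βb₆ past α₅.
  have s23 : HurwitzEquiv
      [α₅, βb₆, β₂, σ₂, σ₁, α₁, α₃, βb₂, β₆, σ₄, σ₇, α₇]
      [α₅ * βb₆ * α₅⁻¹, α₅, β₂, σ₂, σ₁, α₁, α₃, βb₂, β₆, σ₄, σ₇, α₇] :=
    Relation.ReflTransGen.single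
      (HurwitzMove.slideLeft ([] : List G) [β₂, σ₂, σ₁, α₁, α₃, βb₂, β₆, σ₄, σ₇, α₇] α₅ βb₆)
  -- Step 4: rotate α₅ * βb₆ * α₅⁻¹ to the back.
  have hz3 : ([α₅ * βb₆ * α₅⁻¹, α₅, β₂, σ₂, σ₁, α₁, α₃, βb₂, β₆, σ₄, σ₇, α₇] : List G).prod
      ∈ Subgroup.center G := by
    have := (hurwitzEquiv_prod_eq (s12.trans s23)) ▸ hz1
    exact this
  have s34 : HurwitzEquiv
      [α₅ * βb₆ * α₅⁻¹, α₅, β₂, σ₂, σ₁, α₁, α₃, βb₂, β₆, σ₄, σ₇, α₇]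
      [α₅, β₂, σ₂, σ₁, α₁, α₃, βb₂, β₆, σ₄, σ₇, α₇, α₅ * βb₆ * α₅⁻¹] :=
    hurwitz_rotate (α₅ * βb₆ * α₅⁻¹) [α₅, β₂, σ₂, σ₁, α₁, α₃, βb₂, β₆, σ₄, σ₇, α₇] hz3
  -- Local moves.
  have m1 : HurwitzMove
      [α₅, β₂, σ₂, σ₁, α₁, α₃, βb₂, β₆, σ₄, σ₇, α₇, α₅ * βb₆ * α₅⁻¹]
      [α₅, β₂ * σ₂ * β₂⁻¹, β₂, σ₁, α₁, α₃, βb₂, β₆, σ₄, σ₇, α₇, α₅ * βb₆ * α₅⁻¹] :=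
    HurwitzMove.slideLeft [α₅] [σ₁, α₁, α₃, βb₂, β₆, σ₄, σ₇, α₇, α₅ * βb₆ * α₅⁻¹] β₂ σ₂
  have m2 : HurwitzMove
      [α₅, β₂ * σ₂ * β₂⁻¹, β₂, σ₁, α₁, α₃, βb₂, β₆, σ₄, σ₇, α₇, α₅ * βb₆ * α₅⁻¹]
      [α₅, β₂ * σ₂ * β₂⁻¹, β₂ * σ₁ * β₂⁻¹, β₂, α₁, α₃, βb₂, β₆, σ₄, σ₇, α₇, α₅ * βb₆ * α₅⁻¹] :=
    HurwitzMove.slideLeft [α₅, β₂ * σ₂ * β₂⁻¹]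
      [α₁, α₃, βb₂, β₆, σ₄, σ₇, α₇, α₅ * βb₆ * α₅⁻¹] β₂ σ₁
  have m3 : HurwitzEquiv
      [α₅, β₂ * σ₂ * β₂⁻¹, β₂ * σ₁ * β₂⁻¹, β₂, α₁, α₃, βb₂, β₆, σ₄, σ₇, α₇, α₅ * βb₆ * α₅⁻¹]
      [α₅, β₂ * σ₂ * β₂⁻¹, β₂ * σ₁ * β₂⁻¹, β₂, α₃, α₁, βb₂, β₆, σ₄, σ₇, α₇, α₅ * βb₆ * α₅⁻¹] := by
    have := Relation.ReflTransGen.single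
      (HurwitzMove.slideLeft [α₅, β₂ * σ₂ * β₂⁻¹, β₂ * σ₁ * β₂⁻¹, β₂]
        [βb₂, β₆, σ₄, σ₇, α₇, α₅ * βb₆ * α₅⁻¹] α₁ α₃)
    rwa [show [α₅, β₂ * σ₂ * β₂⁻¹, β₂ * σ₁ * β₂⁻¹, β₂] ++
        (α₁ * α₃ * α₁⁻¹) :: α₁ :: [βb₂, β₆, σ₄, σ₇, α₇, α₅ * βb₆ * α₅⁻¹]
        = [α₅, β₂ * σ₂ * β₂⁻¹, β₂ * σ₁ * β₂⁻¹, β₂, α₁ * α₃ * α₁⁻¹, α₁, βb₂, β₆, σ₄, σ₇, α₇,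
          α₅ * βb₆ * α₅⁻¹] from rfl, e13] at this
  have m4 : HurwitzMove
      [α₅, β₂ * σ₂ * β₂⁻¹, β₂ * σ₁ * β₂⁻¹, β₂, α₃, α₁, βb₂, β₆, σ₄, σ₇, α₇, α₅ * βb₆ * α₅⁻¹]
      [α₅, β₂ * σ₂ * β₂⁻¹, β₂ * σ₁ * β₂⁻¹, β₂, α₃, α₁ * βb₂ * α₁⁻¹, α₁, β₆, σ₄, σ₇, α₇,
        α₅ * βb₆ * α₅⁻¹] :=
    HurwitzMove.slideLeft [α₅, β₂ * σ₂ * β₂⁻¹, β₂ * σ₁ * β₂⁻¹, β₂, α₃]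
      [β₆, σ₄, σ₇, α₇, α₅ * βb₆ * α₅⁻¹] α₁ βb₂
  have m5 : HurwitzMove
      [α₅, β₂ * σ₂ * β₂⁻¹, β₂ * σ₁ * β₂⁻¹, β₂, α₃, α₁ * βb₂ * α₁⁻¹, α₁, β₆, σ₄, σ₇, α₇,
        α₅ * βb₆ * α₅⁻¹]
      [α₅, β₂ * σ₂ * β₂⁻¹, β₂ * σ₁ * β₂⁻¹, α₃, α₃⁻¹ * β₂ * α₃, α₁ * βb₂ * α₁⁻¹, α₁, β₆, σ₄, σ₇,
        α₇, α₅ * βb₆ * α₅⁻¹] :=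
    HurwitzMove.slideRight [α₅, β₂ * σ₂ * β₂⁻¹, β₂ * σ₁ * β₂⁻¹]
      [α₁ * βb₂ * α₁⁻¹, α₁, β₆, σ₄, σ₇, α₇, α₅ * βb₆ * α₅⁻¹] β₂ α₃
  have m6 : HurwitzMove
      [α₅, β₂ * σ₂ * β₂⁻¹, β₂ * σ₁ * β₂⁻¹, α₃, α₃⁻¹ * β₂ * α₃, α₁ * βb₂ * α₁⁻¹, α₁, β₆, σ₄, σ₇,
        α₇, α₅ * βb₆ * α₅⁻¹]
      [α₅, β₂ * σ₂ * β₂⁻¹, β₂ * σ₁ * β₂⁻¹, α₃, α₃⁻¹ * β₂ * α₃, α₁ * βb₂ * α₁⁻¹, α₁,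
        β₆ * σ₄ * β₆⁻¹, β₆, σ₇, α₇, α₅ * βb₆ * α₅⁻¹] :=
    HurwitzMove.slideLeft
      [α₅, β₂ * σ₂ * β₂⁻¹, β₂ * σ₁ * β₂⁻¹, α₃, α₃⁻¹ * β₂ * α₃, α₁ * βb₂ * α₁⁻¹, α₁]
      [σ₇, α₇, α₅ * βb₆ * α₅⁻¹] β₆ σ₄
  have m7 : HurwitzMove
      [α₅, β₂ * σ₂ * β₂⁻¹, β₂ * σ₁ * β₂⁻¹, α₃, α₃⁻¹ * β₂ * α₃, α₁ * βb₂ * α₁⁻¹, α₁,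
        β₆ * σ₄ * β₆⁻¹, β₆, σ₇, α₇, α₅ * βb₆ * α₅⁻¹]
      [α₅, β₂ * σ₂ * β₂⁻¹, β₂ * σ₁ * β₂⁻¹, α₃, α₃⁻¹ * β₂ * α₃, α₁ * βb₂ * α₁⁻¹, α₁,
        β₆ * σ₄ * β₆⁻¹, β₆ * σ₇ * β₆⁻¹, β₆, α₇, α₅ * βb₆ * α₅⁻¹] :=
    HurwitzMove.slideLeft
      [α₅, β₂ * σ₂ * β₂⁻¹, β₂ * σ₁ * β₂⁻¹, α₃, α₃⁻¹ * β₂ * α₃, α₁ * βb₂ * α₁⁻¹, α₁,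
        β₆ * σ₄ * β₆⁻¹]
      [α₇, α₅ * βb₆ * α₅⁻¹] β₆ σ₇
  have m8 : HurwitzMove
      [α₅, β₂ * σ₂ * β₂⁻¹, β₂ * σ₁ * β₂⁻¹, α₃, α₃⁻¹ * β₂ * α₃, α₁ * βb₂ * α₁⁻¹, α₁,
        β₆ * σ₄ * β₆⁻¹, β₆ * σ₇ * β₆⁻¹, β₆, α₇, α₅ * βb₆ * α₅⁻¹]
      [α₅, β₂ * σ₂ * β₂⁻¹, β₂ * σ₁ * β₂⁻¹, α₃, α₃⁻¹ * β₂ * α₃, α₁ * βb₂ * α₁⁻¹, α₁,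
        β₆ * σ₄ * β₆⁻¹, β₆ * σ₇ * β₆⁻¹, α₇, α₇⁻¹ * β₆ * α₇, α₅ * βb₆ * α₅⁻¹] :=
    HurwitzMove.slideRight
      [α₅, β₂ * σ₂ * β₂⁻¹, β₂ * σ₁ * β₂⁻¹, α₃, α₃⁻¹ * β₂ * α₃, α₁ * βb₂ * α₁⁻¹, α₁,
        β₆ * σ₄ * β₆⁻¹, β₆ * σ₇ * β₆⁻¹]
      [α₅ * βb₆ * α₅⁻¹] β₆ α₇
  exact s01.trans (s12.trans (s23.trans (s34.trans
    ((Relation.ReflTransGen.single m1).trans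
      ((Relation.ReflTransGen.single m2).trans
        (m3.trans ((Relation.ReflTransGen.single m4).trans
          ((Relation.ReflTransGen.single m5).trans
            ((Relation.ReflTransGen.single m6).trans
              ((Relation.ReflTransGen.single m7).trans
                (Relation.ReflTransGen.single m8)))))))))))
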